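/- Contraction for linear independencies: for a positive definite matrix Σ partitioned by disjoint sets a, b, c, d, if Π_{a|b.c} = 0 and Π_{a|d.bc} = 0 then Π_{a|bd.c} = 0. -/

import Mathlib

variable {n : ℕ}

/-- The submatrix (block) of `S` with rows `x` and columns `y`. -/
def blk (S : Matrix (Fin n) (Fin n) ℝ) (x y : Finset (Fin n)) : Matrix x y ℝ :=
  Matrix.of fun i j => S i j

/-- The conditional covariance block `Σ_{xy|z} = Σ_{xy} − Σ_{xz} Σ_{zz}⁻¹ Σ_{zy}`. -/
noncomputable def condCov (S : Matrix (Fin n) (Fin n) ℝ) (x y z : Finset (Fin n)) :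
    Matrix x y ℝ :=
  blk S x y - blk S x z * (blk S z z)⁻¹ * blk S z y

/-- The partial regression coefficient matrix `Π_{x|y.z} = Σ_{xy|z} Σ_{yy|z}⁻¹`. -/
noncomputable def regCoef (S : Matrix (Fin n) (Fin n) ℝ) (x y z : Finset (Fin n)) :
    Matrix x y ℝ :=
  condCov S x y z * (condCov S y y z)⁻¹

open Matrix

section Aux

/-- A positive semidefinite real matrix with invertible determinant is positive definite. -/
theorem posDef_of_posSemidef_isUnit {k : Type*} [Fintype k] [DecidableEq k]
    {M : Matrix k k ℝ} (h : M.PosSemidef) (hM : IsUnit M.det) : M.PosDef := by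
  refine posDef_iff_dotProduct_mulVec.mpr
    ⟨h.1, fun x hx => lt_of_le_of_ne (h.dotProduct_mulVec_nonneg x) fun h0 => hx ?_⟩
  have hmv : M *ᵥ x = 0 := (h.dotProduct_mulVec_zero_iff x).mp h0.symm
  have hxx : M⁻¹ *ᵥ (M *ᵥ x) = x := by
    rw [Matrix.mulVec_mulVec, Matrix.nonsing_inv_mul _ hM, Matrix.one_mulVec]
  rw [← hxx, hmv, Matrix.mulVec_zero]

/-- A principal submatrix of a positive definite matrix along an injective map is
positive definite. -/
theorem posDef_submatrix_of_injective {m k : Type*} [Fintype m] [Fintype k]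
    {M : Matrix k k ℝ} (hM : M.PosDef) {e : m → k} (he : Function.Injective e) :
    (M.submatrix e e).PosDef := by
  classical
  refine posDef_iff_dotProduct_mulVec.mpr ⟨hM.1.submatrix e, fun x hx => ?_⟩
  set y : k → ℝ := fun j => ∑ i, if e i = j then x i else 0 with hy
  have hsum : ∀ f : k → ℝ, (∑ j, y j * f j) = ∑ i, x i * f (e i) := by
    intro f
    simp only [hy, Finset.sum_mul, ite_mul, zero_mul]
    rw [Finset.sum_comm]
    exact Finset.sum_congr rfl fun i _ => by simp [Finset.sum_ite_eq]
  have hy_e : ∀ i, y (e i) = x i := by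
    intro i
    simp [hy, he.eq_iff, Finset.sum_ite_eq]
  have hy0 : y ≠ 0 := by
    intro h
    apply hx
    funext i
    have := hy_e i
    rw [h] at this
    simpa using this.symm
  have key : star x ⬝ᵥ (M.submatrix e e) *ᵥ x = star y ⬝ᵥ M *ᵥ y := by
    simp only [star_trivial, dotProduct, mulVec, submatrix_apply]
    rw [hsum fun j => ∑ k', M j k' * y k']
    refine Finset.sum_congr rfl fun i _ => ?_
    congr 1
    have c1 : (∑ k', M (e i) k' * y k') = ∑ k', y k' * M (e i) k' :=
      Finset.sum_congr rfl fun _ _ => mul_comm _ _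
    have c2 : (∑ k' : k, y k' * M (e i) k') = ∑ i', x i' * M (e i) (e i') := hsum _
    have c3 : (∑ i' : m, x i' * M (e i) (e i')) = ∑ i', M (e i) (e i') * x i' :=
      Finset.sum_congr rfl fun _ _ => mul_comm _ _
    rw [← c3, ← c2, ← c1]
  rw [key]
  exact hM.dotProduct_mulVec_pos hy0

variable {S : Matrix (Fin n) (Fin n) ℝ}

theorem blk_eq_submatrix (S : Matrix (Fin n) (Fin n) ℝ) (x y : Finset (Fin n)) :
    blk S x y = S.submatrix (fun i : x => (i : Fin n)) (fun j : y => (j : Fin n)) := rfl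

theorem blk_posDef (hS : S.PosDef) (x : Finset (Fin n)) : (blk S x x).PosDef := by
  rw [blk_eq_submatrix]
  exact posDef_submatrix_of_injective hS Subtype.coe_injective

theorem blk_conjTranspose (hS : S.IsHermitian) (x y : Finset (Fin n)) :
    (blk S x y)ᴴ = blk S y x := by
  ext i j
  simp only [conjTranspose_apply, blk, Matrix.of_apply, star_trivial]
  exact (hS.apply _ _).symm.trans (star_trivial _)

end Aux

section CoeElim

variable {b c : Finset (Fin n)}

theorem coe_union_symm (hbc : Disjoint b c) (i : ↥(b ∪ c)) :
    Sum.elim (fun p : b => (p : Fin n)) (fun p : c => (p : Fin n))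
      ((Equiv.Finset.union b c hbc).symm i) = (i : Fin n) := by
  set e := Equiv.Finset.union b c hbc
  have h : e (e.symm i) = i := e.apply_symm_apply i
  rcases hp : e.symm i with p | p <;> rw [hp] at h
  · rw [Equiv.Finset.union_inl] at h
    simpa using congrArg (fun q : ↥(b ∪ c) => (q : Fin n)) h
  · rw [Equiv.Finset.union_inr] at h
    simpa using congrArg (fun q : ↥(b ∪ c) => (q : Fin n)) h

theorem blk_union_cols (S : Matrix (Fin n) (Fin n) ℝ) (hbc : Disjoint b c)
    (x : Finset (Fin n)) :
    blk S x (b ∪ c) = (fromCols (blk S x b) (blk S x c)).submatrix id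
      (Equiv.Finset.union b c hbc).symm := by
  ext i j
  have := coe_union_symm hbc j
  rcases hp : (Equiv.Finset.union b c hbc).symm j with p | p <;> rw [hp] at this <;>
    simp_all [blk, fromCols_apply_inl, fromCols_apply_inr, submatrix_apply]

theorem blk_union_rows (S : Matrix (Fin n) (Fin n) ℝ) (hbc : Disjoint b c)
    (y : Finset (Fin n)) :
    blk S (b ∪ c) y = (fromRows (blk S b y) (blk S c y)).submatrix
      (Equiv.Finset.union b c hbc).symm id := by
  ext i j
  have := coe_union_symm hbc i
  rcases hp : (Equiv.Finset.union b c hbc).symm i with p | p <;> rw [hp] at this <;>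
    simp_all [blk, fromRows_apply_inl, fromRows_apply_inr, submatrix_apply]

theorem blk_union_union (S : Matrix (Fin n) (Fin n) ℝ) (hbc : Disjoint b c) :
    blk S (b ∪ c) (b ∪ c) =
      (fromBlocks (blk S b b) (blk S b c) (blk S c b) (blk S c c)).submatrix
        (Equiv.Finset.union b c hbc).symm (Equiv.Finset.union b c hbc).symm := by
  ext i j
  have hi := coe_union_symm hbc i
  have hj := coe_union_symm hbc j
  rcases hp : (Equiv.Finset.union b c hbc).symm i with p | p <;>
    rcases hq : (Equiv.Finset.union b c hbc).symm j with q | q <;>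
      rw [hp] at hi <;> rw [hq] at hj <;>
        simp_all [blk, fromBlocks, submatrix_apply]

end CoeElim

section Main

variable {S : Matrix (Fin n) (Fin n) ℝ}

/-- The conditional covariance on a set is positive definite. -/
theorem condCov_posDef (hS : S.PosDef) (y z : Finset (Fin n)) (hyz : Disjoint y z) :
    (condCov S y y z).PosDef := by
  classical
  set A := blk S y y
  set B := blk S y z
  set D := blk S z z with hD
  have hBH : Bᴴ = blk S z y := blk_conjTranspose hS.1 y z
  have hDpd : D.PosDef := blk_posDef hS z
  haveI : Invertible D := D.invertibleOfIsUnitDet hDpd.det_pos.ne'.isUnit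
  -- the big block matrix is positive definite
  have hf : Function.Injective (Sum.elim (fun p : y => (p : Fin n)) (fun p : z => (p : Fin n))) := by
    rintro (p | p) (q | q) h <;> simp only [Sum.elim_inl, Sum.elim_inr] at h
    · exact congrArg Sum.inl (Subtype.ext h)
    · exact absurd (h ▸ p.2) (Finset.disjoint_left.mp hyz.symm q.2)
    · exact absurd (h ▸ p.2) (Finset.disjoint_left.mp hyz q.2)
    · exact congrArg Sum.inr (Subtype.ext h)
  have hMeq : S.submatrix (Sum.elim (fun p : y => (p : Fin n)) fun p : z => (p : Fin n))
      (Sum.elim (fun p : y => (p : Fin n)) fun p : z => (p : Fin n)) =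
      fromBlocks A B Bᴴ D := by
    rw [hBH]
    ext (i | i) (j | j) <;> rfl
  have hMpd : (fromBlocks A B Bᴴ D).PosDef := hMeq ▸ posDef_submatrix_of_injective hS hf
  have hpsd : (A - B * D⁻¹ * Bᴴ).PosSemidef :=
    (PosDef.fromBlocks₂₂ A B hDpd).mp hMpd.posSemidef
  haveI : Invertible (fromBlocks A B Bᴴ D) :=
    (fromBlocks A B Bᴴ D).invertibleOfIsUnitDet hMpd.det_pos.ne'.isUnit
  haveI hSchur : Invertible (A - B * ⅟D * Bᴴ) :=
    invertibleOfFromBlocks₂₂Invertible A B Bᴴ D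
  have hunit : IsUnit (A - B * D⁻¹ * Bᴴ).det := by
    rw [← invOf_eq_nonsing_inv]
    exact (isUnit_iff_isUnit_det _).mp (isUnit_of_invertible _)
  have : (A - B * D⁻¹ * Bᴴ).PosDef := posDef_of_posSemidef_isUnit hpsd hunit
  rwa [hBH] at this
  -- condCov S y y z = A - B * D⁻¹ * blk S z y definitionally

theorem condCov_eq_zero_of_regCoef (hS : S.PosDef) {x y z : Finset (Fin n)}
    (hyz : Disjoint y z) (h : regCoef S x y z = 0) : condCov S x y z = 0 := by
  have hpd := condCov_posDef hS y z hyz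
  have := congrArg (· * condCov S y y z) h
  simpa [regCoef, Matrix.mul_assoc,
    Matrix.nonsing_inv_mul _ hpd.det_pos.ne'.isUnit] using this

/-- Stepwise conditioning identity:
`Σ_{xy|b∪c} = Σ_{xy|c} − Σ_{xb|c} Σ_{bb|c}⁻¹ Σ_{by|c}`. -/
theorem condCov_union (hS : S.PosDef) (x y b c : Finset (Fin n)) (hbc : Disjoint b c) :
    condCov S x y (b ∪ c) =
      condCov S x y c - condCov S x b c * (condCov S b b c)⁻¹ * condCov S b y c := by
  classical
  set e := Equiv.Finset.union b c hbc
  set A := blk S b b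
  set B := blk S b c
  set C := blk S c b
  set D := blk S c c
  have hDpd : D.PosDef := blk_posDef hS c
  haveI : Invertible D := D.invertibleOfIsUnitDet hDpd.det_pos.ne'.isUnit
  have hSchurPd : (A - B * D⁻¹ * C).PosDef := condCov_posDef hS b c hbc
  haveI hi1 : Invertible (A - B * D⁻¹ * C) :=
    (A - B * D⁻¹ * C).invertibleOfIsUnitDet hSchurPd.det_pos.ne'.isUnit
  haveI hi2 : Invertible (A - B * ⅟D * C) := by rwa [invOf_eq_nonsing_inv]
  haveI := fromBlocks₂₂Invertible A B C D
  set W := (A - B * D⁻¹ * C)⁻¹ with hW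
  have hinv : (fromBlocks A B C D)⁻¹ =
      fromBlocks W (-(W * B * D⁻¹)) (-(D⁻¹ * C * W)) (D⁻¹ + D⁻¹ * C * W * B * D⁻¹) := by
    rw [← invOf_eq_nonsing_inv, invOf_fromBlocks₂₂_eq]
    simp only [invOf_eq_nonsing_inv, hW]
  have h1 : blk S x (b ∪ c) = (fromCols (blk S x b) (blk S x c)).submatrix id e.symm :=
    blk_union_cols S hbc x
  have h2 : blk S (b ∪ c) y = (fromRows (blk S b y) (blk S c y)).submatrix e.symm id :=
    blk_union_rows S hbc y
  have h3 : blk S (b ∪ c) (b ∪ c) = (fromBlocks A B C D).submatrix e.symm e.symm :=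
    blk_union_union S hbc
  have hprod : blk S x (b ∪ c) * (blk S (b ∪ c) (b ∪ c))⁻¹ * blk S (b ∪ c) y =
      fromCols (blk S x b) (blk S x c) * (fromBlocks A B C D)⁻¹ *
        fromRows (blk S b y) (blk S c y) := by
    rw [h1, h2, h3, inv_submatrix_equiv, submatrix_mul_equiv, submatrix_mul_equiv,
      submatrix_id_id]
  have expand : fromCols (blk S x b) (blk S x c) * (fromBlocks A B C D)⁻¹ *
      fromRows (blk S b y) (blk S c y) =
      blk S x c * D⁻¹ * blk S c y +
        (blk S x b - blk S x c * D⁻¹ * C) * W * (blk S b y - B * D⁻¹ * blk S c y) := by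
    rw [hinv, fromCols_mul_fromBlocks, fromCols_mul_fromRows]
    simp only [Matrix.mul_sub, Matrix.sub_mul, Matrix.mul_add, Matrix.add_mul,
      Matrix.mul_neg, Matrix.neg_mul, Matrix.mul_assoc]
    abel
  show blk S x y - blk S x (b ∪ c) * (blk S (b ∪ c) (b ∪ c))⁻¹ * blk S (b ∪ c) y = _
  rw [hprod, expand]
  show _ = blk S x y - blk S x c * D⁻¹ * blk S c y -
      (blk S x b - blk S x c * D⁻¹ * C) * W * (blk S b y - B * D⁻¹ * blk S c y)
  abel

theorem condCov_union_cols (S : Matrix (Fin n) (Fin n) ℝ) {b d : Finset (Fin n)}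
    (hbd : Disjoint b d) (x z : Finset (Fin n)) :
    condCov S x (b ∪ d) z =
      (fromCols (condCov S x b z) (condCov S x d z)).submatrix id
        (Equiv.Finset.union b d hbd).symm := by
  set e := Equiv.Finset.union b d hbd
  have hmul : blk S x z * (blk S z z)⁻¹ *
      ((fromCols (blk S z b) (blk S z d)).submatrix id e.symm) =
      (fromCols (blk S x z * (blk S z z)⁻¹ * blk S z b)
        (blk S x z * (blk S z z)⁻¹ * blk S z d)).submatrix id e.symm := by
    rw [← mul_fromCols, Matrix.submatrix_mul _ _ id id e.symm Function.bijective_id,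
      Matrix.submatrix_id_id]
  show blk S x (b ∪ d) - blk S x z * (blk S z z)⁻¹ * blk S z (b ∪ d) = _
  rw [blk_union_cols S hbd x, blk_union_cols S hbd z, hmul]
  ext i j
  rcases hq : e.symm j with q | q <;>
    simp [condCov, fromCols_apply_inl, fromCols_apply_inr, submatrix_apply, hq,
        (show (Equiv.Finset.union b d hbd).symm j = _ from hq), Matrix.sub_apply]

end Main

/-- contraction, `Π_{a|b.c} = 0` and `Π_{a|d.bc} = 0` imply
`Π_{a|bd.c} = 0`. -/
theorem regCoef_contraction (S : Matrix (Fin n) (Fin n) ℝ) (hS : S.PosDef)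
    (a b c d : Finset (Fin n))
    (hab : Disjoint a b) (hac : Disjoint a c) (had : Disjoint a d)
    (hbc : Disjoint b c) (hbd : Disjoint b d) (hcd : Disjoint c d)
    (h1 : regCoef S a b c = 0) (h2 : regCoef S a d (b ∪ c) = 0) :
    regCoef S a (b ∪ d) c = 0 := by
  have hdbc : Disjoint d (b ∪ c) := Finset.disjoint_union_right.mpr ⟨hbd.symm, hcd.symm⟩
  have hcab : condCov S a b c = 0 := condCov_eq_zero_of_regCoef hS hbc h1
  have hcad_bc : condCov S a d (b ∪ c) = 0 := condCov_eq_zero_of_regCoef hS hdbc h2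
  have hcad : condCov S a d c = 0 := by
    have := condCov_union hS a d b c hbc
    rw [hcad_bc, hcab] at this
    simpa using this.symm
  have hzero : condCov S a (b ∪ d) c = 0 := by
    rw [condCov_union_cols S hbd a c, hcab, hcad]
    ext i j
    rcases hq : (Equiv.Finset.union b d hbd).symm j with q | q <;>
      simp [fromCols, submatrix_apply, hq]
  rw [regCoef, hzero, Matrix.zero_mul]
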